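/- Let x₁ ≠ x₂ be real numbers and g : ℝ → ℝ a differentiable function. Define y(x) = g(x) + (x/(x₁ - x₂))·(g(x₂) - g(x₁)) + ((x² - x(x₁ + x₂))/(2(x₁ - x₂)))·(g'(x₂) - g'(x₁)). Then y satisfies the relative constraints y(x₁) = y(x₂) and y'(x₁) = y'(x₂). -/

import Mathlib

theorem relative_constraints_constrained_expression
    (x₁ x₂ : ℝ) (hx : x₁ ≠ x₂) (g : ℝ → ℝ) (hg : Differentiable ℝ g)
    (y : ℝ → ℝ)
    (hy : y = fun x => g x
      + x / (x₁ - x₂) * (g x₂ - g x₁)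
      + (x ^ 2 - x * (x₁ + x₂)) / (2 * (x₁ - x₂)) * (deriv g x₂ - deriv g x₁)) :
    y x₁ = y x₂ ∧ deriv y x₁ = deriv y x₂ := by
  have hx' : x₁ - x₂ ≠ 0 := sub_ne_zero.mpr hx
  have hd : ∀ x : ℝ, HasDerivAt y
      (deriv g x + 1 / (x₁ - x₂) * (g x₂ - g x₁)
        + (2 * x - (x₁ + x₂)) / (2 * (x₁ - x₂)) * (deriv g x₂ - deriv g x₁)) x := by
    intro x
    subst hy
    have h1 := (hg x).hasDerivAt
    have h2 : HasDerivAt (fun x : ℝ => x / (x₁ - x₂) * (g x₂ - g x₁))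
        (1 / (x₁ - x₂) * (g x₂ - g x₁)) x := by
      simpa using ((hasDerivAt_id x).div_const (x₁ - x₂)).mul_const (g x₂ - g x₁)
    have h3 : HasDerivAt (fun x : ℝ => (x ^ 2 - x * (x₁ + x₂)) / (2 * (x₁ - x₂)) * (deriv g x₂ - deriv g x₁))
        ((2 * x - (x₁ + x₂)) / (2 * (x₁ - x₂)) * (deriv g x₂ - deriv g x₁)) x := by
      have hp : HasDerivAt (fun x : ℝ => x ^ 2 - x * (x₁ + x₂)) (2 * x - (x₁ + x₂)) x := by
        exact ((hasDerivAt_pow 2 x).sub ((hasDerivAt_id x).mul_const (x₁ + x₂))).congr_deriv (by norm_num)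
      exact (hp.div_const (2 * (x₁ - x₂))).mul_const _
    exact (h1.add h2).add h3
  constructor
  · subst hy
    field_simp
    ring
  · rw [(hd x₁).deriv, (hd x₂).deriv]
    field_simp
    ring
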